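/- Let q ≥ 2, k ≥ 2, n ≥ 1, s with q^s > q^{n-1} + (k-1)(q-1)q^{k-2}. Let F(α_1,...,α_n) = F_1 · F_2 be a polynomial in n variables over F_{q^s}, where F_2 is the n×n Moore determinant det(α_j^{q^{i-1}})_{i,j} and F_1 is any polynomial with deg_{α_j} F_1 ≤ (k-1)(q-1)q^{k-2} for each j. If F is not the zero polynomial, then there exist α_1,...,α_n ∈ F_{q^s} with F(α_1,...,α_n) ≠ 0; in particular such α_1,...,α_n are linearly independent over F_q. -/
import Mathlib

open MvPolynomial Matrix

/-- degree bound for the Moore determinant in each variable. -/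
lemma moore_degreeOf_le (K : Type*) [CommRing K] [Nontrivial K] (q n : ℕ) (hq : 1 ≤ q) (j : Fin n) :
    MvPolynomial.degreeOf j
      (Matrix.det (Matrix.of fun i j : Fin n =>
        (MvPolynomial.X j : MvPolynomial (Fin n) K) ^ q ^ (i : ℕ))) ≤ q ^ (n - 1) := by
  rw [Matrix.det_apply']
  refine le_trans (MvPolynomial.degreeOf_sum_le _ _ _) ?_
  rw [Finset.sup_le_iff]
  intro σ _
  rw [show (((Equiv.Perm.sign σ : ℤ)) : MvPolynomial (Fin n) K)
      = MvPolynomial.C (((Equiv.Perm.sign σ : ℤ)) : K) from (map_intCast (MvPolynomial.C : K →+* MvPolynomial (Fin n) K) _).symm]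
  refine le_trans (MvPolynomial.degreeOf_C_mul_le _ _ _) ?_
  refine le_trans (MvPolynomial.degreeOf_prod_le _ _ _) ?_
  calc ∑ i : Fin n, MvPolynomial.degreeOf j
          ((Matrix.of fun i j : Fin n =>
            (MvPolynomial.X j : MvPolynomial (Fin n) K) ^ q ^ (i : ℕ)) (σ i) i)
      ≤ ∑ i : Fin n, (if i = j then q ^ ((σ i : ℕ)) else 0) := by
        refine Finset.sum_le_sum fun i _ => ?_
        rw [Matrix.of_apply]
        refine le_trans (MvPolynomial.degreeOf_pow_le _ _ _) ?_
        rcases eq_or_ne i j with rfl | h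
        · simp [MvPolynomial.degreeOf_X]
        · simp [MvPolynomial.degreeOf_X, Ne.symm h]
    _ = q ^ ((σ j : ℕ)) := by simp
    _ ≤ q ^ (n - 1) := by
        refine Nat.pow_le_pow_right hq ?_
        have := (σ j).isLt
        omega

/-- Schwartz–Zippel for finite fields, per-variable degree version. -/
lemma sz_exists_eval_ne_zero {K : Type*} [Field K] [Fintype K] {n : ℕ}
    (p : MvPolynomial (Fin n) K)
    (hdeg : ∀ j, MvPolynomial.degreeOf j p ≤ Fintype.card K - 1) (hp : p ≠ 0) :
    ∃ α : Fin n → K, MvPolynomial.eval α p ≠ 0 := by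
  classical
  by_contra hcon
  push_neg at hcon
  set e : ULift (Fin n) ≃ Fin n := Equiv.ulift with he
  set P : MvPolynomial (ULift (Fin n)) K := MvPolynomial.rename e.symm p with hP
  have hPmem : P ∈ MvPolynomial.restrictDegree (ULift (Fin n)) K (Fintype.card K - 1) := by
    rw [MvPolynomial.mem_restrictDegree]
    intro s hs i
    have h1 : MvPolynomial.degreeOf i P ≤ Fintype.card K - 1 := by
      have : i = e.symm (e i) := by simp
      rw [this, hP, MvPolynomial.degreeOf_rename_of_injective e.symm.injective]
      exact hdeg (e i)
    exact le_trans (MvPolynomial.degreeOf_le_iff.mp le_rfl s hs) h1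
  have hPzero : P = 0 := by
    refine MvPolynomial.eq_zero_of_eval_eq_zero _ _ P (fun v => ?_) hPmem
    rw [hP, MvPolynomial.eval_rename]
    exact hcon _
  apply hp
  have := congrArg (MvPolynomial.rename (e : ULift (Fin n) → Fin n)) hPzero
  rw [hP, MvPolynomial.rename_rename, map_zero] at this
  simpa using this

/-- Schwartz–Zippel applied to `F = F₁ · F₂`, where `F₂` is the `n × n` Moore
determinant `det (α_j^{q^{i-1}})` and `deg_{α_j} F₁ ≤ (k-1)(q-1)q^{k-2}`:
if `q^s > q^{n-1} + (k-1)(q-1)q^{k-2}` and `F ≠ 0`, then there are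
`α_1, …, α_n ∈ F_{q^s}` with `F(α_1,…,α_n) ≠ 0`; in particular these `α_j`
are linearly independent over `F_q`. -/
theorem exists_eval_ne_zero_moore
    (Fq K : Type*) [Field Fq] [Fintype Fq] [Field K] [Fintype K] [Algebra Fq K]
    (q s n k : ℕ) (hq : 2 ≤ q) (hk : 2 ≤ k) (hn : 1 ≤ n)
    (hcardFq : Fintype.card Fq = q) (hcardK : Fintype.card K = q ^ s)
    (hbound : q ^ (n - 1) + (k - 1) * (q - 1) * q ^ (k - 2) < q ^ s)
    (F₁ : MvPolynomial (Fin n) K)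
    (hdeg : ∀ j, MvPolynomial.degreeOf j F₁ ≤ (k - 1) * (q - 1) * q ^ (k - 2))
    (hF : F₁ * Matrix.det
        (Matrix.of fun i j : Fin n =>
          (MvPolynomial.X j : MvPolynomial (Fin n) K) ^ q ^ (i : ℕ)) ≠ 0) :
    ∃ α : Fin n → K,
      MvPolynomial.eval α
        (F₁ * Matrix.det
          (Matrix.of fun i j : Fin n =>
            (MvPolynomial.X j : MvPolynomial (Fin n) K) ^ q ^ (i : ℕ))) ≠ 0 ∧
      LinearIndependent Fq α := by
  classical
  set D := Matrix.det (Matrix.of fun i j : Fin n =>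
      (MvPolynomial.X j : MvPolynomial (Fin n) K) ^ q ^ (i : ℕ)) with hD
  have hdegF : ∀ j, MvPolynomial.degreeOf j (F₁ * D) ≤ Fintype.card K - 1 := by
    intro j
    have h1 := MvPolynomial.degreeOf_mul_le j F₁ D
    have h2 := moore_degreeOf_le K q n (by omega) j
    rw [← hD] at h2
    have h3 := hdeg j
    rw [hcardK]
    omega
  obtain ⟨α, hα⟩ := sz_exists_eval_ne_zero (F₁ * D) hdegF hF
  refine ⟨α, hα, ?_⟩
  have hDα : Matrix.det (Matrix.of fun i j : Fin n => (α j) ^ q ^ (i : ℕ)) ≠ 0 := by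
    intro h0
    apply hα
    rw [RingHom.map_mul]
    have : MvPolynomial.eval α D =
        Matrix.det (Matrix.of fun i j : Fin n => (α j) ^ q ^ (i : ℕ)) := by
      rw [hD, RingHom.map_det]
      congr 1
      ext i j
      simp
    rw [this, h0, mul_zero]
  rw [Fintype.linearIndependent_iff]
  intro g hg
  by_contra hne
  push_neg at hne
  obtain ⟨j₀, hj₀⟩ := hne
  -- char p setup
  set p := ringChar Fq with hpdef
  haveI : CharP Fq p := ringChar.charP Fq
  haveI hpfact : Fact p.Prime := ⟨CharP.char_is_prime Fq p⟩
  haveI : CharP K p := charP_of_injective_algebraMap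
    (algebraMap Fq K).injective p
  obtain ⟨m, -, hqm⟩ := FiniteField.card Fq p
  rw [hcardFq] at hqm
  have hinj := (algebraMap Fq K).injective
  set v : Fin n → K := fun j => algebraMap Fq K (g j) with hv
  have hvne : v ≠ 0 := by
    intro h0
    apply hj₀
    apply hinj
    rw [map_zero]
    simpa [hv] using congrFun h0 j₀
  have hmul : (Matrix.of fun i j : Fin n => (α j) ^ q ^ (i : ℕ)) *ᵥ v = 0 := by
    funext i
    have hqi : q ^ (i : ℕ) = p ^ (m * (i : ℕ)) := by rw [hqm, ← pow_mul]
    have hcj : ∀ j, v j ^ q ^ (i : ℕ) = v j := by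
      intro j
      rw [hv]
      rw [← map_pow, ← hcardFq, FiniteField.pow_card_pow]
    show (∑ j, (Matrix.of fun i j : Fin n => (α j) ^ q ^ (i : ℕ)) i j * v j) = 0
    calc (∑ j, (Matrix.of fun i j : Fin n => (α j) ^ q ^ (i : ℕ)) i j * v j)
        = ∑ j, (v j * α j) ^ q ^ (i : ℕ) := by
          refine Finset.sum_congr rfl fun j _ => ?_
          rw [mul_pow, hcj j, Matrix.of_apply, mul_comm]
      _ = (∑ j, v j * α j) ^ q ^ (i : ℕ) := by
          simp_rw [hqi, ← iterateFrobenius_def (R := K) (p := p) (n := m * (i : ℕ))]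
          exact (map_sum (iterateFrobenius K p (m * (i : ℕ))) _ _).symm
      _ = 0 := by
          have : (∑ j, v j * α j) = 0 := by
            rw [← hg]
            exact Finset.sum_congr rfl fun j _ => (Algebra.smul_def _ _).symm
          rw [this]
          exact zero_pow (pow_ne_zero _ (by omega))
  exact hDα (Matrix.exists_mulVec_eq_zero_iff.mp ⟨v, hvne, hmul⟩)
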